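/- For a connected graph G with vertex set {v_1,...,v_n} and sink v_n, if {U, W} is a cut with v_n ∈ W and the cut is not connected (i.e., G[U] or G[W] is disconnected), then there exists a connected cut {U', W'} with v_n ∈ W' such that the monomial x^{C'} divides x^{C}, where for a cut C = {U,W} with v_n ∈ W, x^C = ∏_{u ∈ U} x_u^{d_U(u)} and d_U(u) is the number of edges from u to vertices outside U. Consequently, the G-parking function ideal I is generated by the monomials x^C for C ranging over connected cuts. -/

import Mathlib

open SimpleGraph
open scoped Classical

/-- A loopless multigraph on vertex type `V` with edge labels `E`. -/
structure MG (V : Type*) (E : Type*) where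
  ends : E → Sym2 V
  no_loop : ∀ e, ¬ (ends e).IsDiag

variable {V E : Type*} [Fintype V] [DecidableEq V] [Fintype E]

/-- The underlying adjacency (simple) graph of a multigraph. -/
def MG.adjGraph (G : MG V E) : SimpleGraph V :=
  SimpleGraph.fromRel (fun u v => ∃ e, G.ends e = s(u, v))

/-- `π` is a connected partition: every block induces a connected subgraph. -/
def ConnPart (H : SimpleGraph V) (π : Setoid V) : Prop :=
  ∀ c ∈ π.classes, (H.induce c).Connected

/-- `d_U(u)`: the number of edges joining `u` to a vertex outside `U`. -/
noncomputable def dU (G : MG V E) (U : Set V) (u : V) : ℕ :=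
  Nat.card {e : E // ∃ w, w ∉ U ∧ G.ends e = s(u, w)}

/-- `{U, Uᶜ}` is a connected cut: both sides induce connected subgraphs. -/
def ConnCut (G : MG V E) (U : Set V) : Prop :=
  (G.adjGraph.induce U).Connected ∧ (G.adjGraph.induce Uᶜ).Connected

/-- The monomial `x^C = ∏_{u ∈ U} x_u^{d_U(u)}` attached to the cut
`C = {U, Uᶜ}` with sink `s ∈ Uᶜ`, in `k[x_u : u ≠ s]`. -/
noncomputable def xC (k : Type*) [Field k] (G : MG V E) (s : V) (U : Set V) :
    MvPolynomial {v : V // v ≠ s} k :=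
  MvPolynomial.monomial
    (Finsupp.equivFunOnFinite.symm
      fun u : {v : V // v ≠ s} => if (u : V) ∈ U then dU G U u else 0) 1

/-- The `G`-parking function ideal: generated by `x^C` for `C` a connected cut. -/
noncomputable def parkIdeal (k : Type*) [Field k] (G : MG V E) (s : V) :
    Ideal (MvPolynomial {v : V // v ≠ s} k) :=
  Ideal.span {p | ∃ U : Set V, s ∉ U ∧ ConnCut G U ∧ p = xC k G s U}

namespace ParkAux

set_option linter.unusedSectionVars false

/-- Single adjacency step within a set `S`. -/
def RS (H : SimpleGraph V) (S : Set V) : V → V → Prop :=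
  fun a b => a ∈ S ∧ b ∈ S ∧ H.Adj a b

lemma RS_symm {H : SimpleGraph V} {S : Set V} : Symmetric (RS H S) :=
  fun _ _ h => ⟨h.2.1, h.1, h.2.2.symm⟩

lemma rtg_symm {H : SimpleGraph V} {S : Set V} {a b : V}
    (h : Relation.ReflTransGen (RS H S) a b) : Relation.ReflTransGen (RS H S) b a :=
  by haveI : Std.Symm (RS H S) := ⟨fun _ _ h => RS_symm h⟩; exact Std.Symm.symm _ _ h

lemma mem_right {H : SimpleGraph V} {S : Set V} {a b : V} (ha : a ∈ S)
    (h : Relation.ReflTransGen (RS H S) a b) : b ∈ S := by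
  induction h with
  | refl => exact ha
  | tail _ step _ => exact step.2.1

lemma rtg_mono {H : SimpleGraph V} {A B : Set V} (hAB : A ⊆ B) {a b : V}
    (h : Relation.ReflTransGen (RS H A) a b) : Relation.ReflTransGen (RS H B) a b :=
  Relation.ReflTransGen.lift id (fun _ _ h => ⟨hAB h.1, hAB h.2.1, h.2.2⟩) _ _ h

lemma induce_connected {H : SimpleGraph V} {S : Set V} (hne : S.Nonempty)
    (h : ∀ a ∈ S, ∀ b ∈ S, Relation.ReflTransGen (RS H S) a b) :
    (H.induce S).Connected := by
  rw [SimpleGraph.connected_iff]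
  refine ⟨?_, ⟨⟨hne.choose, hne.choose_spec⟩⟩⟩
  rintro ⟨a, ha⟩ ⟨b, hb⟩
  have key : ∀ {x : V}, Relation.ReflTransGen (RS H S) a x → ∀ (hx : x ∈ S),
      (H.induce S).Reachable ⟨a, ha⟩ ⟨x, hx⟩ := by
    intro x hr
    induction hr with
    | refl => intro _; exact SimpleGraph.Reachable.refl _
    | @tail b c hprev step ih =>
      intro hc
      exact (ih step.1).trans (SimpleGraph.Adj.reachable
        (show (H.induce S).Adj ⟨b, step.1⟩ ⟨c, hc⟩ from step.2.2))
  exact key (h a ha b hb) hb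

lemma escape {H : SimpleGraph V} {S : Set V} {x y : V}
    (h : Relation.ReflTransGen H.Adj x y) (hy : y ∉ S) :
    x ∈ S → ∃ a b, a ∈ S ∧ b ∉ S ∧ H.Adj a b ∧ Relation.ReflTransGen (RS H S) x a := by
  induction h using Relation.ReflTransGen.head_induction_on with
  | refl => exact fun hx => absurd hx hy
  | @head u c hadj _ ih =>
    intro hu
    by_cases hc : c ∈ S
    · obtain ⟨a, b, haS, hbS, hab, hreach⟩ := ih hc
      exact ⟨a, b, haS, hbS, hab, Relation.ReflTransGen.head ⟨hu, hc, hadj⟩ hreach⟩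
    · exact ⟨u, c, hu, hc, hadj, Relation.ReflTransGen.refl⟩

/-- The key combinatorial lemma: for any nonempty `U` avoiding the sink there is a
connected cut `U'` whose degree exponents are pointwise below those of `U`. -/
lemma key (G : MG V E) (hG : G.adjGraph.Connected) (s : V) (U : Set V)
    (hU : U.Nonempty) (hsU : s ∉ U) :
    ∃ U' : Set V, s ∉ U' ∧ ConnCut G U' ∧
      ∀ u : V, (if u ∈ U' then dU G U' u else 0) ≤ (if u ∈ U then dU G U u else 0) := by
  set H := G.adjGraph with hH
  obtain ⟨u₀, hu₀⟩ := hU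
  have hsUc : s ∈ Uᶜ := hsU
  set W₁ : Set V := {v | Relation.ReflTransGen (RS H Uᶜ) s v} with hW₁def
  have hsW₁ : s ∈ W₁ := Relation.ReflTransGen.refl
  have hW₁sub : W₁ ⊆ Uᶜ := fun v hv => mem_right hsUc hv
  set U' : Set V := W₁ᶜ with hU'def
  have hUU' : U ⊆ U' := fun v hv hvW => (hW₁sub hvW) hv
  have hu₀U' : u₀ ∈ U' := hUU' hu₀
  have hsU' : s ∉ U' := fun h => h hsW₁
  set U₁ : Set V := {v | Relation.ReflTransGen (RS H U') u₀ v} with hU₁def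
  have hU₁sub : U₁ ⊆ U' := fun v hv => mem_right hu₀U' hv
  have hu₀U₁ : u₀ ∈ U₁ := Relation.ReflTransGen.refl
  have hsU₁ : s ∉ U₁ := fun h => hsU' (hU₁sub h)
  have adj_of_edge : ∀ {u w : V} (e : E), G.ends e = s(u, w) → H.Adj u w := by
    intro u w e he
    rw [hH, MG.adjGraph, SimpleGraph.fromRel_adj]
    exact ⟨fun h => G.no_loop e (by rw [he]; exact Sym2.mk_isDiag_iff.2 h), Or.inl ⟨e, he⟩⟩
  -- neighbors of `U₁` outside `U₁` lie in `W₁`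
  have hnbr : ∀ u ∈ U₁, ∀ w, H.Adj u w → w ∉ U₁ → w ∈ W₁ := by
    intro u hu w hadj hw
    by_contra hwW
    exact hw (Relation.ReflTransGen.tail hu ⟨hU₁sub hu, hwW, hadj⟩)
  -- `G[U₁]` is connected
  have liftU₁ : ∀ {x : V}, Relation.ReflTransGen (RS H U') u₀ x →
      Relation.ReflTransGen (RS H U₁) u₀ x := by
    intro x h
    induction h with
    | refl => exact Relation.ReflTransGen.refl
    | @tail b c hprev step ih =>
      exact Relation.ReflTransGen.tail ih
        ⟨hprev, Relation.ReflTransGen.tail hprev step, step.2.2⟩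
  have hconnU₁ : (H.induce U₁).Connected := by
    refine induce_connected ⟨u₀, hu₀U₁⟩ ?_
    intro a ha b hb
    exact (rtg_symm (liftU₁ ha)).trans (liftU₁ hb)
  -- `G[U₁ᶜ]` is connected
  have hW₁U₁c : W₁ ⊆ U₁ᶜ := fun v hv hvU₁ => (hU₁sub hvU₁) hv
  have liftW₁ : ∀ {x : V}, Relation.ReflTransGen (RS H Uᶜ) s x →
      Relation.ReflTransGen (RS H U₁ᶜ) s x := by
    intro x h
    induction h with
    | refl => exact Relation.ReflTransGen.refl
    | @tail b c hprev step ih =>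
      exact Relation.ReflTransGen.tail ih
        ⟨hW₁U₁c hprev, hW₁U₁c (Relation.ReflTransGen.tail hprev step), step.2.2⟩
  have reach_s : ∀ v ∈ U₁ᶜ, Relation.ReflTransGen (RS H U₁ᶜ) v s := by
    intro v hv
    by_cases hvW : v ∈ W₁
    · exact rtg_symm (liftW₁ hvW)
    · have hvU' : v ∈ U' := hvW
      set K : Set V := {x | Relation.ReflTransGen (RS H U') v x} with hKdef
      have hKU' : K ⊆ U' := fun x hx => mem_right hvU' hx
      have hKU₁c : K ⊆ U₁ᶜ := by
        intro x hx hxU₁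
        exact hv (Relation.ReflTransGen.trans hxU₁ (rtg_symm hx))
      have hsK : s ∉ K := fun h => hsU' (hKU' h)
      have hglob : Relation.ReflTransGen H.Adj v s :=
        (SimpleGraph.reachable_iff_reflTransGen v s).1 (hG.preconnected v s)
      obtain ⟨a, b, haK, hbK, hab, hreach⟩ :=
        escape hglob hsK Relation.ReflTransGen.refl
      have hbU' : b ∉ U' := by
        intro hbU'
        exact hbK (Relation.ReflTransGen.tail (rtg_mono hKU' hreach) ⟨hKU' haK, hbU', hab⟩)
      have hbW₁ : b ∈ W₁ := not_not.1 hbU'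
      exact ((rtg_mono hKU₁c hreach).tail ⟨hKU₁c haK, hW₁U₁c hbW₁, hab⟩).trans
        (rtg_symm (liftW₁ hbW₁))
  have hconnU₁c : (H.induce U₁ᶜ).Connected := by
    refine induce_connected ⟨s, fun h => hsU₁ h⟩ ?_
    intro a ha b hb
    exact (reach_s a ha).trans (rtg_symm (reach_s b hb))
  refine ⟨U₁, hsU₁, ⟨hconnU₁, hconnU₁c⟩, ?_⟩
  intro u
  by_cases hu1 : u ∈ U₁
  · by_cases huU : u ∈ U
    · rw [if_pos hu1, if_pos huU]
      rw [dU, dU, Nat.card_eq_fintype_card, Nat.card_eq_fintype_card]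
      apply Fintype.card_subtype_mono
      rintro e ⟨w, hw, he⟩
      refine ⟨w, ?_, he⟩
      exact hW₁sub (hnbr u hu1 w (adj_of_edge e he) hw)
    · rw [if_pos hu1, if_neg huU]
      have : IsEmpty {e : E // ∃ w, w ∉ U₁ ∧ G.ends e = s(u, w)} := by
        constructor
        rintro ⟨e, w, hw, he⟩
        have hwW₁ : w ∈ W₁ := hnbr u hu1 w (adj_of_edge e he) hw
        have huW₁ : u ∈ W₁ :=
          Relation.ReflTransGen.tail hwW₁ ⟨hW₁sub hwW₁, huU, (adj_of_edge e he).symm⟩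
        exact (hU₁sub hu1) huW₁
      simp [dU, Nat.card_of_isEmpty]
  · rw [if_neg hu1]
    exact Nat.zero_le _

lemma dvd_of_exp_le (k : Type*) [Field k] (G : MG V E) (s : V) {A B : Set V}
    (h : ∀ u : V, (if u ∈ A then dU G A u else 0) ≤ (if u ∈ B then dU G B u else 0)) :
    xC k G s A ∣ xC k G s B := by
  rw [xC, xC, MvPolynomial.monomial_dvd_monomial]
  refine ⟨Or.inr ?_, dvd_rfl⟩
  intro u
  simpa using h u

end ParkAux

/-- If `{U, Uᶜ}` (with sink `s ∉ U`) is a cut which is not connected, then some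
connected cut's monomial `x^{C'}` divides `x^C`; consequently the `G`-parking
function ideal (generated by the connected-cut monomials) coincides with the
ideal generated by the monomials of all cuts. -/
theorem stmt_7 (k : Type*) [Field k] (G : MG V E) (hG : G.adjGraph.Connected)
    (s : V) (U : Set V) (hU : U.Nonempty) (hsU : s ∉ U) (hnc : ¬ ConnCut G U) :
    (∃ U' : Set V, s ∉ U' ∧ ConnCut G U' ∧ xC k G s U' ∣ xC k G s U) ∧
    parkIdeal k G s =
      Ideal.span {p | ∃ W : Set V, W.Nonempty ∧ s ∉ W ∧ p = xC k G s W} := by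
  constructor
  · obtain ⟨U', hs', hcc', hle⟩ := ParkAux.key G hG s U hU hsU
    exact ⟨U', hs', hcc', ParkAux.dvd_of_exp_le k G s hle⟩
  · apply le_antisymm
    · apply Ideal.span_mono
      rintro p ⟨U'', hs'', hcc'', rfl⟩
      refine ⟨U'', ?_, hs'', rfl⟩
      have : Nonempty ↥U'' := hcc''.1.nonempty
      exact Set.nonempty_coe_sort.1 this
    · rw [Ideal.span_le]
      rintro p ⟨W, hWne, hsW, rfl⟩
      obtain ⟨U', hs', hcc', hle⟩ := ParkAux.key G hG s W hWne hsW
      obtain ⟨c, hc⟩ := ParkAux.dvd_of_exp_le k G s (A := U') (B := W) hle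
      rw [hc]
      exact Ideal.mul_mem_right _ _ (Ideal.subset_span ⟨U', hs', hcc', rfl⟩)
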